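/- Suppose the Fréchet derivative f' is uniformly continuous on C, the stepsizes (γ_k) are chosen by line minimization, and f has a sharp minimum point x* ∈ C, i.e., there exists α > 0 with f(x) ≥ f(x*) + α·‖x − x*‖ for all x ∈ C. Assume moreover that for each k the point x̄_k is the unique solution in C of the variational inequality ⟨f'(x_k), x − x̄_k⟩ ≥ 0 for all x ∈ C. Then the sequence (x_k) generated by the Frank–Wolfe algorithm converges to x* in norm with finite termination: there exists k_0 such that x_k = x* for all k > k_0. -/

import Mathlib

open Filter Topology Set

section Aux

variable {X : Type*} [NormedAddCommGroup X] [NormedSpace ℝ X]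
  {f : X → ℝ} {f' : X → X →L[ℝ] ℝ}

/-- derivative of f along a line -/
lemma fw_line_deriv (hfderiv : ∀ x : X, HasFDerivAt f (f' x) x) (x d : X) (t : ℝ) :
    HasDerivAt (fun s : ℝ => f (x + s • d)) (f' (x + t • d) d) t := by
  have h1 : HasDerivAt (fun s : ℝ => x + s • d) d t := by
    simpa using ((hasDerivAt_id t).smul_const d).const_add x
  exact (hfderiv (x + t • d)).comp_hasDerivAt t h1

/-- convexity of f along a line -/
lemma fw_line_convex (hfconv : ConvexOn ℝ Set.univ f) (x d : X) :
    ConvexOn ℝ Set.univ (fun t : ℝ => f (x + t • d)) := by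
  have := hfconv.comp_affineMap (AffineMap.lineMap x (x + d))
  simp only [Set.preimage_univ] at this
  have e : (fun t : ℝ => f (x + t • d)) = f ∘ AffineMap.lineMap x (x + d) := by
    funext t
    simp [AffineMap.lineMap_apply_module', Function.comp]
    congr 1
    abel
  rw [e]; exact this

/-- gradient inequality for convex functions -/
lemma fw_grad_ineq (hfconv : ConvexOn ℝ Set.univ f)
    (hfderiv : ∀ x : X, HasFDerivAt f (f' x) x) (x y : X) :
    f x + f' x (y - x) ≤ f y := by
  set φ : ℝ → ℝ := fun t => f (x + t • (y - x)) with hφ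
  have hc : ConvexOn ℝ Set.univ φ := fw_line_convex hfconv x (y - x)
  have hd : HasDerivAt φ (f' x (y - x)) 0 := by
    simpa using fw_line_deriv hfderiv x (y - x) 0
  have := hc.le_slope_of_hasDerivAt (mem_univ 0) (mem_univ 1) one_pos hd
  have h0 : φ 0 = f x := by simp [hφ]
  have h1 : φ 1 = f y := by simp [hφ]
  rw [slope_def_field, h0, h1] at this
  simp at this
  simp only [map_sub] at this ⊢
  linarith

/-- sharp minimum implies a lower bound on the directional derivatives at the minimum -/
lemma fw_sharp_deriv {C : Set X} (hCcv : Convex ℝ C)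
    (hfderiv : ∀ x : X, HasFDerivAt f (f' x) x)
    {xstar : X} (hxstarC : xstar ∈ C) {α : ℝ}
    (hsharp : ∀ y ∈ C, f xstar + α * ‖y - xstar‖ ≤ f y) :
    ∀ y ∈ C, α * ‖y - xstar‖ ≤ f' xstar (y - xstar) := by
  intro y hy
  set φ : ℝ → ℝ := fun t => f (xstar + t • (y - xstar)) with hφ
  have hd : HasDerivAt φ (f' xstar (y - xstar)) 0 := by
    simpa using fw_line_deriv hfderiv xstar (y - xstar) 0
  have hT : Tendsto (slope φ 0) (𝓝[>] 0) (𝓝 (f' xstar (y - xstar))) :=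
    (hasDerivAt_iff_tendsto_slope.mp hd).mono_left
      (nhdsWithin_mono 0 (fun t ht => ne_of_gt ht))
  refine ge_of_tendsto hT ?_
  filter_upwards [Ioo_mem_nhdsGT_of_mem (by simp : (0:ℝ) ∈ Ico (0:ℝ) 1)] with t ht
  have hmem : xstar + t • (y - xstar) ∈ C := by
    have heq : xstar + t • (y - xstar) = (1 - t) • xstar + t • y := by module
    rw [heq]
    exact hCcv hxstarC hy (by linarith [ht.2]) ht.1.le (by ring)
  have hs := hsharp _ hmem
  have hnorm : ‖(xstar + t • (y - xstar)) - xstar‖ = t * ‖y - xstar‖ := by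
    simp [norm_smul, abs_of_pos ht.1]
  rw [hnorm] at hs
  have hφ0 : φ 0 = f xstar := by simp [hφ]
  have hslope : slope φ 0 t = (φ t - φ 0) / t := by
    rw [slope_def_field]; ring_nf
  rw [hslope, le_div_iff₀ ht.1, hφ0]
  have : φ t = f (xstar + t • (y - xstar)) := rfl
  nlinarith

end Aux

/-- **Finite termination of the Frank–Wolfe algorithm at a sharp minimum**
(Theorem 3.3 (iii)). If `f'` is uniformly continuous on `C`, the stepsizes are chosen by
line minimization, `f` has a sharp minimum `x* ∈ C` (i.e. `f(x) ≥ f(x*) + α‖x − x*‖` on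
`C` for some `α > 0`), and each `x̄_k` is the unique solution of the variational
inequality `⟨f'(x_k), x − x̄_k⟩ ≥ 0` for all `x ∈ C`, then `x_k → x*` in norm with
finite termination: `x_k = x*` for all `k` beyond some `k_0`. -/
theorem stmt_7
    {X : Type*} [NormedAddCommGroup X] [NormedSpace ℝ X] [CompleteSpace X]
    (C : Set X) (hCne : C.Nonempty) (hCcl : IsClosed C)
    (hCbd : Bornology.IsBounded C) (hCcv : Convex ℝ C)
    (f : X → ℝ) (f' : X → X →L[ℝ] ℝ)
    (hfconv : ConvexOn ℝ Set.univ f)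
    (hfderiv : ∀ x : X, HasFDerivAt f (f' x) x)
    (hfUC : UniformContinuousOn f' C)
    (xstar : X) (hxstarC : xstar ∈ C) (α : ℝ) (hα : 0 < α)
    (hsharp : ∀ y ∈ C, f xstar + α * ‖y - xstar‖ ≤ f y)
    (x xbar : ℕ → X) (γ : ℕ → ℝ)
    (hx0 : x 0 ∈ C)
    (hxbarC : ∀ k, xbar k ∈ C)
    (hxbarmin : ∀ k, ∀ y ∈ C, f' (x k) (xbar k) ≤ f' (x k) y)
    (hxbarunique : ∀ k, ∀ z ∈ C, (∀ y ∈ C, 0 ≤ f' (x k) (y - z)) → z = xbar k)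
    (hγ : ∀ k, γ k ∈ Set.Icc (0 : ℝ) 1)
    (hupdate : ∀ k, x (k + 1) = x k + γ k • (xbar k - x k))
    (hlinemin : ∀ k, ∀ γ' ∈ Set.Icc (0 : ℝ) 1,
      f (x k + γ k • (xbar k - x k)) ≤ f (x k + γ' • (xbar k - x k))) :
    Tendsto x atTop (𝓝 xstar) ∧ ∃ k₀ : ℕ, ∀ k > k₀, x k = xstar := by
  -- bound on the diameter of C
  obtain ⟨M0, hM0⟩ := Metric.isBounded_iff.mp hCbd
  set M : ℝ := max M0 1 with hMdef
  have hMpos : (0:ℝ) < M := lt_of_lt_of_le one_pos (le_max_right _ _)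
  have hMd : ∀ u ∈ C, ∀ v ∈ C, ‖u - v‖ ≤ M := by
    intro u hu v hv
    rw [← dist_eq_norm]
    exact le_trans (hM0 hu hv) (le_max_left _ _)
  -- all iterates lie in C
  have hxC : ∀ k, x k ∈ C := by
    intro k
    induction k with
    | zero => exact hx0
    | succ n ih =>
      rw [hupdate n]
      have h := hγ n
      have heq : x n + γ n • (xbar n - x n) = (1 - γ n) • x n + γ n • xbar n := by module
      rw [heq]
      exact hCcv ih (hxbarC n) (by linarith [h.2]) h.1 (by ring)
  -- sharp derivative bound
  have hsd : ∀ y ∈ C, α * ‖y - xstar‖ ≤ f' xstar (y - xstar) :=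
    fw_sharp_deriv hCcv hfderiv hxstarC hsharp
  -- once the derivative is close to f' xstar, the next iterate is xstar
  have hstep : ∀ k, ‖f' (x k) - f' xstar‖ < α/2 → x (k+1) = xstar := by
    intro k hk
    have hbar : xbar k = xstar := by
      have h1 := hsd (xbar k) (hxbarC k)
      have h2 : f' (x k) (xbar k) ≤ f' (x k) xstar := hxbarmin k xstar hxstarC
      have h3 : ‖(f' (x k) - f' xstar) (xbar k - xstar)‖ ≤
          ‖f' (x k) - f' xstar‖ * ‖xbar k - xstar‖ := ContinuousLinearMap.le_opNorm _ _
      rw [Real.norm_eq_abs] at h3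
      have h4 : f' xstar (xbar k - xstar)
          = f' (x k) (xbar k - xstar) - (f' (x k) - f' xstar) (xbar k - xstar) := by simp
      have h5 : f' (x k) (xbar k - xstar) ≤ 0 := by rw [map_sub]; linarith
      have h6 : ‖f' (x k) - f' xstar‖ * ‖xbar k - xstar‖ ≤ (α/2) * ‖xbar k - xstar‖ :=
        mul_le_mul_of_nonneg_right hk.le (norm_nonneg _)
      have h7 := neg_abs_le ((f' (x k) - f' xstar) (xbar k - xstar))
      have h8 : ‖xbar k - xstar‖ ≤ 0 := by nlinarith [norm_nonneg (xbar k - xstar)]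
      rw [← sub_eq_zero]
      exact norm_le_zero_iff.mp h8
    have hineq : f (x (k+1)) ≤ f xstar := by
      have h := hlinemin k 1 ⟨zero_le_one, le_refl 1⟩
      rw [← hupdate k, hbar] at h
      simpa using h
    have h9 := hsharp (x (k+1)) (hxC (k+1))
    have h10 : ‖x (k+1) - xstar‖ ≤ 0 := by nlinarith
    rw [← sub_eq_zero]
    exact norm_le_zero_iff.mp h10
  -- f decreases along iterates
  have hflb : ∀ k, f xstar ≤ f (x k) := by
    intro k
    have := hsharp (x k) (hxC k)
    nlinarith [norm_nonneg (x k - xstar)]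
  -- gap bound
  have hgap : ∀ k, f' (x k) (xbar k - x k) ≤ f xstar - f (x k) := by
    intro k
    have h1 := fw_grad_ineq hfconv hfderiv (x k) xstar
    have h2 : f' (x k) (xbar k) ≤ f' (x k) xstar := hxbarmin k xstar hxstarC
    simp only [map_sub] at h1 ⊢
    linarith
  -- uniform continuity in metric form
  have hUC := Metric.uniformContinuousOn_iff.mp hfUC
  obtain ⟨δ, hδpos, hδ⟩ := hUC (α/2) (by positivity)
  -- key: some iterate has small objective gap
  have hgoal : ∃ k, f (x k) - f xstar < α * δ := by
    by_contra hcon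
    push_neg at hcon
    set δ₀ : ℝ := α * δ with hδ₀def
    have hδ₀pos : 0 < δ₀ := by positivity
    obtain ⟨δ', hδ'pos, hδ'⟩ := hUC (δ₀ / (2*M)) (by positivity)
    set γ₀ : ℝ := min 1 (δ' / (2*M)) with hγ₀def
    have hγ₀pos : 0 < γ₀ := lt_min one_pos (by positivity)
    have hγ₀le1 : γ₀ ≤ 1 := min_le_left _ _
    have hdesc : ∀ k, f (x (k+1)) ≤ f (x k) - γ₀ * δ₀ / 2 := by
      intro k
      set d : X := xbar k - x k with hd
      set φ : ℝ → ℝ := fun t => f (x k + t • d) with hφ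
      have hφd : ∀ t, HasDerivAt φ (f' (x k + t • d) d) t := fw_line_deriv hfderiv (x k) d
      have hmem : ∀ t ∈ Icc (0:ℝ) 1, x k + t • d ∈ C := by
        intro t ht
        have heq : x k + t • d = (1 - t) • x k + t • xbar k := by rw [hd]; module
        rw [heq]
        exact hCcv (hxC k) (hxbarC k) (by linarith [ht.2]) ht.1 (by ring)
      obtain ⟨c, hc, hceq⟩ := exists_hasDerivAt_eq_slope φ (fun t => f' (x k + t • d) d)
        hγ₀pos (fun t _ => (hφd t).continuousAt.continuousWithinAt) (fun t _ => hφd t)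
      have hcC : x k + c • d ∈ C := hmem c ⟨hc.1.le, le_trans hc.2.le hγ₀le1⟩
      have hdnorm : ‖d‖ ≤ M := hMd _ (hxbarC k) _ (hxC k)
      have hγM : γ₀ * M ≤ δ'/2 := by
        have h1 : γ₀ ≤ δ' / (2*M) := min_le_right _ _
        have h2 : γ₀ * M ≤ (δ' / (2*M)) * M := mul_le_mul_of_nonneg_right h1 hMpos.le
        have h3 : (δ' / (2*M)) * M = δ'/2 := by field_simp
        linarith
      have hclose : ‖(x k + c • d) - x k‖ < δ' := by
        have heq : (x k + c • d) - x k = c • d := by abel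
        rw [heq, norm_smul, Real.norm_eq_abs, abs_of_pos hc.1]
        have : c * ‖d‖ ≤ γ₀ * M := by
          apply mul_le_mul hc.2.le hdnorm (norm_nonneg _) (by linarith [hγ₀pos])
        linarith
      have hUCk : ‖f' (x k + c • d) - f' (x k)‖ < δ₀/(2*M) := by
        have := hδ' _ hcC _ (hxC k) (by rw [dist_eq_norm]; exact hclose)
        rwa [dist_eq_norm] at this
      have herr : f' (x k + c • d) d ≤ f' (x k) d + δ₀/2 := by
        have h1 : f' (x k + c • d) d - f' (x k) d = (f' (x k + c • d) - f' (x k)) d := by simp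
        have h2 : ‖(f' (x k + c • d) - f' (x k)) d‖ ≤
            ‖f' (x k + c • d) - f' (x k)‖ * ‖d‖ := ContinuousLinearMap.le_opNorm _ _
        rw [Real.norm_eq_abs] at h2
        have h3 : ‖f' (x k + c • d) - f' (x k)‖ * ‖d‖ ≤ (δ₀/(2*M)) * M :=
          mul_le_mul hUCk.le hdnorm (norm_nonneg _) (by positivity)
        have h4 : (δ₀/(2*M)) * M = δ₀/2 := by field_simp
        have h5 := le_abs_self ((f' (x k + c • d) - f' (x k)) d)
        linarith [h1 ▸ h5]
      have hgapk : f' (x k) d ≤ -δ₀ := by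
        have := hgap k
        have := hcon k
        rw [hd]
        linarith
      have hφγ : φ γ₀ - φ 0 = γ₀ * f' (x k + c • d) d := by
        rw [hceq, sub_zero]
        field_simp
      have hφ0 : φ 0 = f (x k) := by simp [hφ]
      have hlin := hlinemin k γ₀ ⟨hγ₀pos.le, hγ₀le1⟩
      rw [← hupdate k, ← hd] at hlin
      have hfin : φ γ₀ ≤ f (x k) - γ₀ * δ₀ / 2 := by nlinarith
      exact le_trans hlin hfin
    -- telescoping contradiction
    have htel : ∀ n : ℕ, f (x n) ≤ f (x 0) - n * (γ₀ * δ₀ / 2) := by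
      intro n
      induction n with
      | zero => simp
      | succ m ih =>
        have := hdesc m
        push_cast
        push_cast at ih
        linarith
    obtain ⟨n, hn⟩ := exists_nat_gt ((f (x 0) - f xstar) / (γ₀ * δ₀ / 2))
    have h1 := htel n
    have h2 := hflb n
    have hpos : 0 < γ₀ * δ₀ / 2 := by positivity
    rw [div_lt_iff₀ hpos] at hn
    linarith
  obtain ⟨k, hk⟩ := hgoal
  have hk2 : x (k+1) = xstar := by
    apply hstep
    have h1 := hsharp (x k) (hxC k)
    have h2 : ‖x k - xstar‖ < δ := by nlinarith
    have := hδ (x k) (hxC k) xstar hxstarC (by rw [dist_eq_norm]; exact h2)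
    rwa [dist_eq_norm] at this
  have hall : ∀ j, x (k+1+j) = xstar := by
    intro j
    induction j with
    | zero => exact hk2
    | succ m ih =>
      have h := hstep (k+1+m) (by rw [ih]; simpa using by positivity)
      have : k+1+(m+1) = (k+1+m)+1 := by ring
      rw [this]
      exact h
  have hge : ∀ j, k+1 ≤ j → x j = xstar := by
    intro j hj
    obtain ⟨m, rfl⟩ := Nat.exists_eq_add_of_le hj
    exact hall m
  constructor
  · apply Tendsto.congr' _ (tendsto_const_nhds : Tendsto (fun _ : ℕ => xstar) atTop (𝓝 xstar))
    filter_upwards [eventually_ge_atTop (k+1)] with j hj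
    exact (hge j hj).symm
  · exact ⟨k, fun j hj => hge j hj⟩
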